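/- Let 𝔤 be a finite-dimensional real Lie algebra with trivial centre. Then 𝔤 is metabelian if and only if there exist an abelian ideal 𝔫 ⊆ 𝔤 and an abelian Lie subalgebra 𝔞 ⊆ 𝔤 such that 𝔤 = 𝔫 ∔ 𝔞 (i.e. 𝔫 ∩ 𝔞 = {0} and 𝔫 + 𝔞 = 𝔤 as vector spaces). -/

import Mathlib

open LieAlgebra LieModule


/-- A finite-dimensional real Lie algebra `𝔤` with trivial centre is metabelian
if and only if it decomposes as `𝔤 = 𝔫 ∔ 𝔞` with `𝔫` an abelian ideal and `𝔞` an
abelian subalgebra. -/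
theorem stmt7 (L : Type*) [LieRing L] [LieAlgebra ℝ L] [Module.Finite ℝ L]
    (hcenter : LieAlgebra.center ℝ L = ⊥) :
    (∀ x ∈ LieAlgebra.derivedSeries ℝ L 1, ∀ y ∈ LieAlgebra.derivedSeries ℝ L 1, ⁅x, y⁆ = 0) ↔
      ∃ (n : LieIdeal ℝ L) (a : LieSubalgebra ℝ L),
        (∀ x ∈ n, ∀ y ∈ n, ⁅x, y⁆ = 0) ∧ (∀ x ∈ a, ∀ y ∈ a, ⁅x, y⁆ = 0) ∧
        (∀ x, x ∈ n → x ∈ a → x = 0) ∧ (∀ x : L, ∃ y ∈ n, ∃ z ∈ a, x = y + z) := by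
  classical
  have hds : LieAlgebra.derivedSeries ℝ L 1 = ⁅(⊤ : LieIdeal ℝ L), (⊤ : LieIdeal ℝ L)⁆ := by
    rw [LieAlgebra.derivedSeries_def]
    rfl
  have hbr : ∀ u v : L, ⁅u, v⁆ ∈ LieAlgebra.derivedSeries ℝ L 1 := by
    intro u v
    rw [hds]
    exact LieSubmodule.lie_mem_lie (LieSubmodule.mem_top _) (LieSubmodule.mem_top _)
  constructor
  · intro hab
    set n : LieIdeal ℝ L := LieAlgebra.derivedSeries ℝ L 1 with hndef
    obtain ⟨x0, hH⟩ := LieAlgebra.exists_isCartanSubalgebra_engel ℝ L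
    set H : LieSubalgebra ℝ L := LieSubalgebra.engel ℝ x0 with hHdef
    haveI : H.IsCartanSubalgebra := hH
    -- n as an H-submodule of L
    let N' : LieSubmodule ℝ H L :=
      { n.toSubmodule with
        lie_mem := fun {y m} hm => n.lie_mem hm }
    have hNmem : ∀ w : L, w ∈ N' ↔ w ∈ n := fun w => Iff.rfl
    -- posFittingComp ≤ n
    have hpos : ∀ w : L, w ∈ posFittingComp ℝ H L → w ∈ n := by
      intro w hw
      have h1 : posFittingComp ℝ H L ≤ lowerCentralSeries ℝ H L 1 :=
        (posFittingComp_le_iInf_lowerCentralSeries ℝ H L).trans (iInf_le _ 1)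
      have h2 : lowerCentralSeries ℝ H L 1 ≤ N' := by
        rw [LieModule.lowerCentralSeries_succ, LieSubmodule.lieIdeal_oper_eq_span,
          LieSubmodule.lieSpan_le]
        rintro _ ⟨x, m, rfl⟩
        exact hbr _ _
      exact h2 (h1 hw)
    -- L = H + n
    have hsum : ∀ x : L, ∃ y ∈ n, ∃ z ∈ H, x = y + z := by
      intro x
      have hcod := (LieModule.isCompl_genWeightSpace_zero_posFittingComp ℝ H L).codisjoint
      rw [codisjoint_iff] at hcod
      have hx : x ∈ (rootSpace H 0 ⊔ posFittingComp ℝ H L : LieSubmodule ℝ H L) := by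
        rw [hcod]; trivial
      rw [LieSubmodule.mem_sup] at hx
      obtain ⟨a, ha, b, hb, hab'⟩ := hx
      rw [rootSpace_zero_eq, LieSubalgebra.mem_toLieSubmodule] at ha
      exact ⟨b, hpos b hb, a, ha, by rw [← hab']; abel⟩
    -- K := H ∩ n as an H-submodule of L
    let K : LieSubmodule ℝ H L :=
      { H.toSubmodule ⊓ n.toSubmodule with
        lie_mem := fun {y m} hm => by
          rcases hm with ⟨hm1, hm2⟩
          exact ⟨H.lie_mem y.2 hm1, n.lie_mem hm2⟩ }
    have hKmem : ∀ w : L, w ∈ K ↔ w ∈ H ∧ w ∈ n := fun w => Iff.rfl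
    -- H acts nilpotently on K
    haveI : LieModule.IsNilpotent H K := by
      rw [LieModule.isNilpotent_iff_forall (R := ℝ)]
      intro y
      have hy : _root_.IsNilpotent (LieModule.toEnd ℝ H H y) :=
        (LieModule.isNilpotent_iff_forall (R := ℝ)).mp (inferInstance : LieRing.IsNilpotent H) y
      obtain ⟨k, hk⟩ := hy
      refine ⟨k, ?_⟩
      ext m
      have hco : ((LieModule.toEnd ℝ H K y ^ k) m : L) = (LieModule.toEnd ℝ H L y ^ k) (m : L) :=
        LieSubmodule.coe_toEnd_pow ℝ H L K y m k
      have hm1 : (m : L) ∈ H := m.2.1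
      have hco2 : ((LieModule.toEnd ℝ H H y ^ k) ⟨(m : L), hm1⟩ : L)
          = (LieModule.toEnd ℝ H L y ^ k) (m : L) :=
        LieSubmodule.coe_toEnd_pow ℝ H L H.toLieSubmodule y ⟨(m : L), hm1⟩ k
      have : (LieModule.toEnd ℝ H L y ^ k) (m : L) = 0 := by
        rw [← hco2, hk]
        simp
      simp only [LinearMap.zero_apply]
      rw [hco, this]
      simp
    -- K is trivial
    have hK : K = ⊥ := by
      by_contra hKne
      haveI : Nontrivial K := (LieSubmodule.nontrivial_iff_ne_bot ℝ H L).mpr hKne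
      haveI := LieModule.nontrivial_max_triv_of_isNilpotent ℝ H K
      obtain ⟨v, hv⟩ := exists_ne (0 : maxTrivSubmodule ℝ H K)
      have hvprop : ∀ y : H, ⁅y, (v : K)⁆ = 0 := v.2
      have hvn : ((v : K) : L) ∈ n := (v : K).2.2
      have hvcentral : ((v : K) : L) ∈ LieAlgebra.center ℝ L := by
        intro w
        obtain ⟨y, hy, z, hz, rfl⟩ := hsum w
        have h1 : ⁅y, ((v : K) : L)⁆ = 0 := hab y hy _ hvn
        have h2 : ⁅z, ((v : K) : L)⁆ = 0 := by
          have := hvprop ⟨z, hz⟩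
          have hcoe : ((⁅(⟨z, hz⟩ : H), (v : K)⁆ : K) : L) = ⁅z, ((v : K) : L)⁆ := rfl
          rw [this] at hcoe
          simpa using hcoe.symm
        rw [add_lie, h1, h2, add_zero]
      rw [hcenter] at hvcentral
      have : ((v : K) : L) = 0 := hvcentral
      apply hv
      ext
      exact this
    have hHn : ∀ x : L, x ∈ H → x ∈ n → x = 0 := by
      intro x hxH hxn
      have : x ∈ K := ⟨hxH, hxn⟩
      rw [hK] at this
      exact this
    refine ⟨n, H, hab, ?_, ?_, ?_⟩
    · intro x hx y hy
      exact hHn _ (H.lie_mem hx hy) (hbr x y)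
    · intro x hx1 hx2
      exact hHn x hx2 hx1
    · intro x
      obtain ⟨y, hy, z, hz, hxyz⟩ := hsum x
      exact ⟨y, hy, z, hz, hxyz⟩
  · rintro ⟨n, a, hnab, haab, hdisj, hsum⟩
    have hle : LieAlgebra.derivedSeries ℝ L 1 ≤ n := by
      rw [hds, LieSubmodule.lieIdeal_oper_eq_span, LieSubmodule.lieSpan_le]
      rintro _ ⟨u, v, rfl⟩
      obtain ⟨y1, hy1, z1, hz1, h1⟩ := hsum (u : L)
      obtain ⟨y2, hy2, z2, hz2, h2⟩ := hsum (v : L)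
      show ⁅(u : L), (v : L)⁆ ∈ n
      rw [h1, h2, add_lie, lie_add, lie_add]
      have hzz : ⁅z1, z2⁆ = 0 := haab z1 hz1 z2 hz2
      have m1 : ⁅y1, y2⁆ ∈ n := n.lie_mem hy2
      have m2 : ⁅y1, z2⁆ ∈ n := by
        rw [← lie_skew]
        exact neg_mem (n.lie_mem hy1)
      have m3 : ⁅z1, y2⁆ ∈ n := n.lie_mem hy2
      rw [hzz, add_zero]
      exact add_mem (add_mem m1 m2) m3
    intro x hx y hy
    exact hnab x (hle hx) y (hle hy)
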